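/- Let G be a group acting on sets I and S, and suppose there exists a G-equivariant map p : S → I (i.e. p(g·s) = g·p(s) for all g, s). If the permutation representation of G on ℓ²(I) has spectral gap, then the permutation representation of G on ℓ²(S) also has spectral gap. -/

import Mathlib

/-- A unitary representation has spectral gap if some finite set of group elements uniformly
moves every vector. -/
def RepGap {G : Type*} [Group G] {H : Type*} [NormedAddCommGroup H]
    [InnerProductSpace ℂ H] [CompleteSpace H]
    (π : G →* unitary (H →L[ℂ] H)) : Prop :=
  ∃ (F : Finset G) (ε : ℝ), 0 < ε ∧
    ∀ ξ : H, ∃ g ∈ F, ε * ‖ξ‖ ≤ ‖(π g : H →L[ℂ] H) ξ - ξ‖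

/-- The permutation representation of `G` on `ℓ²(I)` associated to an action of `G` on `I`
has spectral gap. -/
def PermRepGap {G : Type*} [Group G] {I : Type*} (act : G → I → I) : Prop :=
  ∀ π : G →* unitary (lp (fun _ : I => ℂ) 2 →L[ℂ] lp (fun _ : I => ℂ) 2),
    (∀ (g : G) (ξ : lp (fun _ : I => ℂ) 2) (i : I),
        ((π g : lp (fun _ : I => ℂ) 2 →L[ℂ] lp (fun _ : I => ℂ) 2) ξ) i = ξ (act g⁻¹ i)) →
    RepGap π


noncomputable section SGAux

open scoped ENNReal

private lemma sg_two_pos : (0:ℝ) < (2 : ℝ≥0∞).toReal := by norm_num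

private lemma sg_two_toReal : (2 : ℝ≥0∞).toReal = (2:ℝ) := by norm_num

private lemma sg_memℓp_comp {I : Type*} (e : I ≃ I) (f : lp (fun _ : I => ℂ) 2) :
    Memℓp (fun i => f (e i)) 2 := by
  apply memℓp_gen
  exact (e.summable_iff (f := fun i => ‖f i‖ ^ (2:ℝ≥0∞).toReal)).mpr
    ((lp.memℓp f).summable sg_two_pos)

private lemma sg_norm_eq {α : Type*} (f : lp (fun _ : α => ℂ) 2) :
    ‖f‖ = (∑' a, ‖f a‖ ^ (2:ℝ)) ^ ((1:ℝ)/2) := by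
  rw [lp.norm_eq_tsum_rpow sg_two_pos f]
  norm_num [sg_two_toReal]

private lemma sg_norm_rpow {α : Type*} (f : lp (fun _ : α => ℂ) 2) :
    ‖f‖ ^ (2:ℝ) = ∑' a, ‖f a‖ ^ (2:ℝ) := by
  have := lp.norm_rpow_eq_tsum sg_two_pos f
  simpa [sg_two_toReal] using this

private lemma sg_summable {α : Type*} (f : lp (fun _ : α => ℂ) 2) :
    Summable fun a => ‖f a‖ ^ (2:ℝ) := by
  have := (lp.memℓp f).summable sg_two_pos
  simpa [sg_two_toReal] using this

private lemma sg_memℓp {α : Type*} {f : α → ℂ}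
    (h : Summable fun a => ‖f a‖ ^ (2:ℝ)) : Memℓp f 2 :=
  memℓp_gen (by simpa [sg_two_toReal] using h)

private lemma sg_sq_sqrt {x : ℝ} (hx : 0 ≤ x) : (x ^ ((1:ℝ)/2)) ^ (2:ℝ) = x := by
  rw [← Real.rpow_mul hx]
  norm_num

variable {G I : Type*} [Group G] [MulAction G I]

private def sgPermIso (g : G) :
    lp (fun _ : I => ℂ) 2 ≃ₗᵢ[ℂ] lp (fun _ : I => ℂ) 2 where
  toFun f := ⟨fun i => f (g⁻¹ • i), sg_memℓp_comp (MulAction.toPerm g⁻¹) f⟩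
  invFun f := ⟨fun i => f (g • i), sg_memℓp_comp (MulAction.toPerm g) f⟩
  map_add' f h := rfl
  map_smul' c f := rfl
  left_inv f := by ext i; simp
  right_inv f := by ext i; simp
  norm_map' f := by
    rw [lp.norm_eq_tsum_rpow sg_two_pos, lp.norm_eq_tsum_rpow sg_two_pos]
    congr 1
    exact (MulAction.toPerm (g⁻¹ : G)).tsum_eq (fun i => ‖f i‖ ^ (2:ℝ≥0∞).toReal)

private def sgPermHom : G →* (lp (fun _ : I => ℂ) 2 ≃ₗᵢ[ℂ] lp (fun _ : I => ℂ) 2) where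
  toFun := sgPermIso
  map_one' := by
    apply LinearIsometryEquiv.ext; intro f; apply lp.ext; funext i
    simp [sgPermIso]
  map_mul' g h := by
    apply LinearIsometryEquiv.ext; intro f; apply lp.ext; funext i
    simp [sgPermIso, mul_smul]
    rfl

private def sgPiI : G →* unitary (lp (fun _ : I => ℂ) 2 →L[ℂ] lp (fun _ : I => ℂ) 2) :=
  (Unitary.linearIsometryEquiv.symm.toMonoidHom).comp sgPermHom

private lemma sgPiI_apply (g : G) (ξ : lp (fun _ : I => ℂ) 2) (i : I) :
    ((sgPiI g).val ξ) i = ξ (g⁻¹ • i) := rfl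

end SGAux


set_option maxHeartbeats 1000000 in
/-- Spectral gap of permutation representations transfers along `G`-equivariant maps:
if `p : S → I` is `G`-equivariant and `G ↷ ℓ²(I)` has spectral gap, then so does
`G ↷ ℓ²(S)`. -/
theorem stmt2 {G I S : Type*} [Group G] [MulAction G I] [MulAction G S]
    (p : S → I) (hp : ∀ (g : G) (s : S), p (g • s) = g • p s)
    (hgap : PermRepGap (fun (g : G) (i : I) => g • i)) :
    PermRepGap (fun (g : G) (s : S) => g • s) := by
  classical
  intro π hπ
  obtain ⟨F, ε, hε, hF⟩ := hgap sgPiI (fun g ξ i => rfl)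
  refine ⟨F, ε, hε, fun ξ => ?_⟩
  have hξsum := sg_summable ξ
  set D : I → ℝ := fun i => ∑' s : (p ⁻¹' {i} : Set S), ‖ξ s.1‖ ^ (2:ℝ) with hD
  have hDnn : ∀ i, 0 ≤ D i := fun i => tsum_nonneg fun s => Real.rpow_nonneg (norm_nonneg _) _
  have hfib : HasSum D (∑' s : S, ‖ξ s‖ ^ (2:ℝ)) := hξsum.hasSum.tsum_fiberwise p
  have hnormD : ∀ i, ‖((D i ^ ((1:ℝ)/2) : ℝ) : ℂ)‖ ^ (2:ℝ) = D i := by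
    intro i
    rw [Complex.norm_real, Real.norm_eq_abs, abs_of_nonneg (Real.rpow_nonneg (hDnn i) _),
      sg_sq_sqrt (hDnn i)]
  have hηmem : Memℓp (fun i : I => ((D i ^ ((1:ℝ)/2) : ℝ) : ℂ)) 2 := by
    apply sg_memℓp
    have h : (fun i : I => ‖((D i ^ ((1:ℝ)/2) : ℝ) : ℂ)‖ ^ (2:ℝ)) = D := funext hnormD
    rw [h]
    exact hfib.summable
  set η : lp (fun _ : I => ℂ) 2 := ⟨fun i => ((D i ^ ((1:ℝ)/2) : ℝ) : ℂ), hηmem⟩ with hη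
  have hηi : ∀ i, ‖η i‖ ^ (2:ℝ) = D i := hnormD
  have h1 : ‖η‖ = ‖ξ‖ := by
    rw [sg_norm_eq, sg_norm_eq]
    congr 1
    calc ∑' i, ‖η i‖ ^ (2:ℝ) = ∑' i, D i := tsum_congr hηi
      _ = ∑' s : S, ‖ξ s‖ ^ (2:ℝ) := hfib.tsum_eq
  obtain ⟨g, hg, hineq⟩ := hF η
  refine ⟨g, hg, ?_⟩
  set ζ : lp (fun _ : S => ℂ) 2 := (π g : _ →L[ℂ] _) ξ with hζ
  have hζap : ∀ s : S, ζ s = ξ (g⁻¹ • s) := fun s => hπ g ξ s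
  have hζsum := sg_summable ζ
  set v : lp (fun _ : S => ℂ) 2 := ζ - ξ with hv
  have hvsum := sg_summable v
  set R : I → ℝ := fun i => ∑' s : (p ⁻¹' {i} : Set S), ‖v s.1‖ ^ (2:ℝ) with hR
  have hfibv : HasSum R (∑' s : S, ‖v s‖ ^ (2:ℝ)) := hvsum.hasSum.tsum_fiberwise p
  set u : lp (fun _ : I => ℂ) 2 := (sgPiI g).val η - η with hu
  have key : ∀ i : I, ‖u i‖ ^ (2:ℝ) ≤ R i := by
    intro i
    have he : ∀ s : (p ⁻¹' {i} : Set S), p (g⁻¹ • s.1) = g⁻¹ • i := by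
      intro s; rw [hp g⁻¹ s.1, s.2]
    have he' : ∀ s : (p ⁻¹' {g⁻¹ • i} : Set S), p (g • s.1) = i := by
      intro s
      have h2 := s.2
      rw [hp g s.1, h2]
      simp
    let e : (p ⁻¹' {i} : Set S) ≃ (p ⁻¹' {g⁻¹ • i} : Set S) :=
      { toFun := fun s => ⟨g⁻¹ • s.1, he s⟩
        invFun := fun s => ⟨g • s.1, he' s⟩
        left_inv := fun s => by simp
        right_inv := fun s => by simp }
    set A : lp (fun _ : (p ⁻¹' {i} : Set S) => ℂ) 2 :=
      ⟨fun s => ζ s.1, sg_memℓp (hζsum.subtype _)⟩ with hA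
    set B : lp (fun _ : (p ⁻¹' {i} : Set S) => ℂ) 2 :=
      ⟨fun s => ξ s.1, sg_memℓp (hξsum.subtype _)⟩ with hB
    have hnA : ‖A‖ = D (g⁻¹ • i) ^ ((1:ℝ)/2) := by
      rw [sg_norm_eq]
      congr 1
      simp only [hD]
      calc (∑' s : (p ⁻¹' {i} : Set S), ‖A s‖ ^ (2:ℝ))
          = ∑' s : (p ⁻¹' {i} : Set S), ‖ξ ((e s : S))‖ ^ (2:ℝ) := by
            refine tsum_congr fun s => ?_
            have hAs : (A s : ℂ) = ξ (g⁻¹ • s.1) := hζap s.1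
            rw [hAs]
            rfl
        _ = ∑' s : (p ⁻¹' {g⁻¹ • i} : Set S), ‖ξ (s : S)‖ ^ (2:ℝ) :=
            e.tsum_eq (fun s : (p ⁻¹' {g⁻¹ • i} : Set S) => ‖ξ (s : S)‖ ^ (2:ℝ))
    have hnB : ‖B‖ = D i ^ ((1:ℝ)/2) := by
      rw [sg_norm_eq]
    have hui : ‖u i‖ = |‖A‖ - ‖B‖| := by
      have h0 : (u i : ℂ) = ((D (g⁻¹ • i) ^ ((1:ℝ)/2) - D i ^ ((1:ℝ)/2) : ℝ) : ℂ) := by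
        rw [hu, lp.coeFn_sub, Pi.sub_apply, sgPiI_apply]
        push_cast
        try rfl
      rw [h0, Complex.norm_real, Real.norm_eq_abs, hnA, hnB]
    have hAB : ‖A - B‖ ^ (2:ℝ) = R i := by
      rw [sg_norm_rpow]
      simp only [hR]
      refine tsum_congr fun s => ?_
      rw [lp.coeFn_sub, Pi.sub_apply, hv, lp.coeFn_sub, Pi.sub_apply]
      try rfl
    calc ‖u i‖ ^ (2:ℝ) = |‖A‖ - ‖B‖| ^ (2:ℝ) := by rw [hui]
      _ ≤ ‖A - B‖ ^ (2:ℝ) :=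
          Real.rpow_le_rpow (abs_nonneg _) (abs_norm_sub_norm_le A B) (by norm_num)
      _ = R i := hAB
  have hsum : ‖u‖ ^ (2:ℝ) ≤ ‖v‖ ^ (2:ℝ) := by
    rw [sg_norm_rpow, sg_norm_rpow]
    calc ∑' i, ‖u i‖ ^ (2:ℝ) ≤ ∑' i, R i := Summable.tsum_le_tsum key (sg_summable u) hfibv.summable
      _ = ∑' s : S, ‖v s‖ ^ (2:ℝ) := hfibv.tsum_eq
  have h2 : ‖u‖ ≤ ‖v‖ := by
    have h22 : ((2:ℕ):ℝ) = (2:ℝ) := by norm_num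
    rw [← h22, Real.rpow_natCast, Real.rpow_natCast] at hsum
    exact le_of_pow_le_pow_left₀ two_ne_zero (norm_nonneg v) hsum
  calc ε * ‖ξ‖ = ε * ‖η‖ := by rw [h1]
    _ ≤ ‖u‖ := hineq
    _ ≤ ‖v‖ := h2
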